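/- Let a > 0, b ∈ ℝ and p ∈ (1,2]. Then (max(a+b,0))^p ≤ a^p + p·a^{p-1}|b| + |b|^p. -/

import Mathlib

open Real MeasureTheory Filter Metric Set

noncomputable section

/-- The Euclidean Laplacian, as the sum of second directional derivatives along the
coordinate axes. -/
def lap {N : ℕ} (u : EuclideanSpace ℝ (Fin N) → ℝ) (x : EuclideanSpace ℝ (Fin N)) : ℝ :=
  ∑ i : Fin N,
    fderiv ℝ (fun y => fderiv ℝ u y (EuclideanSpace.single i (1:ℝ))) x
      (EuclideanSpace.single i (1:ℝ))

/-- `f` is locally Hölder continuous on `s`. -/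
def LocHolderOn {N : ℕ} (f : EuclideanSpace ℝ (Fin N) → ℝ)
    (s : Set (EuclideanSpace ℝ (Fin N))) : Prop :=
  ∀ x ∈ s, ∃ (C α : NNReal) (r : ℝ), 0 < r ∧ 0 < α ∧ α ≤ 1 ∧
    HolderOnWith C α f (Metric.ball x r ∩ s)

/-- The constant `c_p = ((2/(p-1))(N-2-2/(p-1)))^{1/(p-1)}`. -/
def cp (N : ℕ) (p : ℝ) : ℝ := (2 / (p - 1) * ((N:ℝ) - 2 - 2 / (p - 1))) ^ (1 / (p - 1))

/-- The Joseph–Lundgren exponent `p_c = 1 + 4/(N-4+2√(N-1))`. -/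
def pc (N : ℕ) : ℝ := 1 + 4 / ((N:ℝ) - 4 + 2 * Real.sqrt ((N:ℝ) - 1))

/-- The exponent `τ_p^*`. -/
def tauStar (N : ℕ) (p : ℝ) : ℝ :=
  (2 / (p - 1) - ((N:ℝ) - 2) / 2) -
    Real.sqrt ((2 / (p - 1) - ((N:ℝ) - 2) / 2) ^ 2 - 2 * ((N:ℝ) - 2 - 2 / (p - 1)))

/-- The surface measure `σ_{N-1}` of the unit sphere in `ℝ^N`,
expressed as `N` times the volume of the unit ball. -/
def sphereArea (N : ℕ) : ℝ :=
  (N : ℝ) * (volume (Metric.ball (0 : EuclideanSpace ℝ (Fin N)) 1)).toReal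

/-- The normalizing constant `c_N = 1/((N-2)σ_{N-1})` of the fundamental solution of `-Δ`. -/
def cGreen (N : ℕ) : ℝ := 1 / (((N:ℝ) - 2) * sphereArea N)

/-- `u` is a `ν`-fast decaying solution of `-Δ u = V u^p` in `ℝ^N \ {0}`. -/
def FastDecaySol (N : ℕ) (p : ℝ) (V u : EuclideanSpace ℝ (Fin N) → ℝ) (ν : ℝ) : Prop :=
  ContDiffOn ℝ 2 u {0}ᶜ ∧ (∀ x : EuclideanSpace ℝ (Fin N), x ≠ 0 → 0 < u x) ∧
  (∀ x : EuclideanSpace ℝ (Fin N), x ≠ 0 → -lap u x = V x * u x ^ p) ∧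
  Tendsto (fun x : EuclideanSpace ℝ (Fin N) => u x * ‖x‖ ^ ((N:ℝ) - 2))
    (Filter.comap (fun x => ‖x‖) Filter.atTop) (nhds ν)

/-- `u(x)|x|^{2/(p-1)} → c_p` as `x → 0`. -/
def SingAtOrigin (N : ℕ) (p : ℝ) (u : EuclideanSpace ℝ (Fin N) → ℝ) : Prop :=
  Tendsto (fun x : EuclideanSpace ℝ (Fin N) => u x * ‖x‖ ^ (2 / (p - 1)))
    (nhdsWithin 0 {0}ᶜ) (nhds (cp N p))

/-- Condition `(V₀)` with parameters `c₀, τ₀, c_∞, β`. -/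
def V0cond (N : ℕ) (V : EuclideanSpace ℝ (Fin N) → ℝ) (c₀ τ₀ cinf β : ℝ) : Prop :=
  LocHolderOn V {0}ᶜ ∧ 0 < c₀ ∧ 0 < τ₀ ∧
  (∀ x : EuclideanSpace ℝ (Fin N), x ≠ 0 → ‖x‖ ≤ 1 → |V x - 1| ≤ c₀ * ‖x‖ ^ τ₀) ∧
  1 ≤ cinf ∧
  ∀ x : EuclideanSpace ℝ (Fin N), x ≠ 0 → 0 ≤ V x ∧ V x ≤ cinf * (1 + ‖x‖) ^ β

open NNReal in
lemma real_rpow_subadd {x y q : ℝ} (hx : 0 ≤ x) (hy : 0 ≤ y) (hq0 : 0 ≤ q) (hq1 : q ≤ 1) :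
    (x + y) ^ q ≤ x ^ q + y ^ q := by
  have h := NNReal.rpow_add_le_add_rpow (x.toNNReal) (y.toNNReal) hq0 hq1
  have hcoe : ((x.toNNReal + y.toNNReal : ℝ≥0) : ℝ) = x + y := by
    simp [Real.coe_toNNReal _ hx, Real.coe_toNNReal _ hy]
  have h2 : (((x.toNNReal + y.toNNReal) ^ q : ℝ≥0) : ℝ)
      ≤ ((x.toNNReal ^ q + y.toNNReal ^ q : ℝ≥0) : ℝ) := by exact_mod_cast h
  rw [NNReal.coe_rpow, hcoe] at h2
  rw [NNReal.coe_add, NNReal.coe_rpow, NNReal.coe_rpow,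
    Real.coe_toNNReal _ hx, Real.coe_toNNReal _ hy] at h2
  exact h2

/-- elementary inequality for `1 < p ≤ 2`. -/
theorem statement_10 (a b p : ℝ) (ha : 0 < a) (hp : p ∈ Set.Ioc (1:ℝ) 2) :
    max (a + b) 0 ^ p ≤ a ^ p + p * a ^ (p - 1) * |b| + |b| ^ p := by
  obtain ⟨hp1, hp2⟩ := hp
  have hp0 : 0 < p := by linarith
  set c := |b| with hc
  have hc0 : 0 ≤ c := abs_nonneg b
  have hmax : max (a + b) 0 ≤ a + c := by
    rcases le_total (a + b) 0 with h | h
    · rw [max_eq_right h]; positivity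
    · rw [max_eq_left h]
      have := le_abs_self b
      linarith
  have hmax0 : (0:ℝ) ≤ max (a + b) 0 := le_max_right _ _
  have key : (a + c) ^ p ≤ a ^ p + p * a ^ (p - 1) * c + c ^ p := by
    set g : ℝ → ℝ := fun t => (a + t) ^ p - t ^ p - p * a ^ (p - 1) * t with hg
    have hanti : AntitoneOn g (Icc 0 c) := by
      apply antitoneOn_of_deriv_nonpos (convex_Icc 0 c)
      · apply ContinuousOn.sub (ContinuousOn.sub ?_ ?_) ?_
        · exact ((Real.continuous_rpow_const hp0.le).comp
            (continuous_const.add continuous_id)).continuousOn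
        · exact (Real.continuous_rpow_const hp0.le).continuousOn
        · exact (continuous_const.mul continuous_id).continuousOn
      · intro t ht
        rw [interior_Icc] at ht
        have h1 : HasDerivAt (fun t : ℝ => (a + t) ^ p) (p * (a + t) ^ (p - 1)) t := by
          have := (Real.hasDerivAt_rpow_const (x := a + t) (p := p)
            (Or.inl (ne_of_gt (by linarith [ht.1] : (0:ℝ) < a + t)))).comp t ((hasDerivAt_id t).const_add a)
          simpa [Function.comp_def] using this
        have h2 : HasDerivAt (fun t : ℝ => t ^ p) (p * t ^ (p - 1)) t :=
          Real.hasDerivAt_rpow_const (Or.inl (ne_of_gt ht.1))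
        have h3 : HasDerivAt (fun t : ℝ => p * a ^ (p - 1) * t) (p * a ^ (p - 1)) t := by
          simpa using (hasDerivAt_id t).const_mul (p * a ^ (p - 1))
        exact ((h1.sub h2).sub h3).differentiableAt.differentiableWithinAt
      · intro t ht
        rw [interior_Icc] at ht
        have h1 : HasDerivAt (fun t : ℝ => (a + t) ^ p) (p * (a + t) ^ (p - 1)) t := by
          have := (Real.hasDerivAt_rpow_const (x := a + t) (p := p)
            (Or.inl (ne_of_gt (by linarith [ht.1] : (0:ℝ) < a + t)))).comp t ((hasDerivAt_id t).const_add a)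
          simpa [Function.comp_def] using this
        have h2 : HasDerivAt (fun t : ℝ => t ^ p) (p * t ^ (p - 1)) t :=
          Real.hasDerivAt_rpow_const (Or.inl (ne_of_gt ht.1))
        have h3 : HasDerivAt (fun t : ℝ => p * a ^ (p - 1) * t) (p * a ^ (p - 1)) t := by
          simpa using (hasDerivAt_id t).const_mul (p * a ^ (p - 1))
        rw [show deriv g t = _ from ((h1.sub h2).sub h3).deriv]
        have hsub : (a + t) ^ (p - 1) ≤ a ^ (p - 1) + t ^ (p - 1) :=
          real_rpow_subadd ha.le ht.1.le (by linarith) (by linarith)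
        nlinarith [hp0]
    have := hanti (Set.left_mem_Icc.mpr hc0) (Set.right_mem_Icc.mpr hc0) hc0
    simp only [hg] at this
    have h0p : (0:ℝ) ^ p = 0 := Real.zero_rpow (ne_of_gt hp0)
    rw [add_zero, h0p] at this
    linarith
  calc max (a + b) 0 ^ p ≤ (a + c) ^ p := Real.rpow_le_rpow hmax0 hmax hp0.le
    _ ≤ _ := key
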